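/- The circulant graph C_7(1,3) has no total 5-colouring; that is, there is no map σ from the vertices and edges of C_7(1,3) to {1,2,3,4,5} such that adjacent vertices receive distinct colours, adjacent edges receive distinct colours, and every vertex receives a colour distinct from those of its incident edges. -/

import Mathlib

/-- The circulant graph `C_n(1,3)`: vertices are `ZMod n`, and `i` is adjacent to `j`
iff `i - j ≡ ±1` or `±3 (mod n)`. -/
def circulantGraph (n : ℕ) : SimpleGraph (ZMod n) :=
  SimpleGraph.fromRel (fun i j => j - i = 1 ∨ j - i = 3)

/-- `vc` (on vertices) and `ec` (on edges) form a total `k`-colouring of `G`: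
adjacent vertices get distinct colours, adjacent (distinct, incident) edges get distinct
colours, and each vertex gets a colour distinct from those of its incident edges. -/
def IsTotalColoring {V : Type*} (G : SimpleGraph V) (k : ℕ)
    (vc : V → Fin k) (ec : Sym2 V → Fin k) : Prop :=
  (∀ v w : V, G.Adj v w → vc v ≠ vc w) ∧
  (∀ e₁ ∈ G.edgeSet, ∀ e₂ ∈ G.edgeSet, e₁ ≠ e₂ → (∃ v, v ∈ e₁ ∧ v ∈ e₂) → ec e₁ ≠ ec e₂) ∧
  (∀ v : V, ∀ e ∈ G.edgeSet, v ∈ e → vc v ≠ ec e)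

/-- `G` has a total `k`-colouring. -/
def HasTotalColoring {V : Type*} (G : SimpleGraph V) (k : ℕ) : Prop :=
  ∃ vc ec, IsTotalColoring G k vc ec

/-- The total chromatic number of `G`: the least `k` admitting a total `k`-colouring. -/
noncomputable def totalChromaticNumber {V : Type*} (G : SimpleGraph V) : ℕ :=
  sInf {k : ℕ | HasTotalColoring G k}

instance : DecidableRel (circulantGraph 7).Adj := fun a b => by
  show Decidable ((SimpleGraph.fromRel _).Adj a b)
  rw [SimpleGraph.fromRel_adj]
  infer_instance

lemma circ7_no_indep3 : ∀ a b c : ZMod 7, a ≠ b → a ≠ c → b ≠ c →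
    (circulantGraph 7).Adj a b ∨ (circulantGraph 7).Adj a c ∨ (circulantGraph 7).Adj b c := by
  decide

lemma circ7_edge_card :
    (Finset.univ.filter (· ∈ (circulantGraph 7).edgeSet)).card = 14 := by decide

theorem no_total_5_coloring_circulant_7 :
    ¬ HasTotalColoring (circulantGraph 7) 5 := by
  rintro ⟨vc, ec, hv, he, hve⟩
  classical
  set G := circulantGraph 7 with hG
  set E : Finset (Sym2 (ZMod 7)) := Finset.univ.filter (· ∈ G.edgeSet) with hE
  set Vk : Fin 5 → Finset (ZMod 7) :=
    fun k => Finset.univ.filter (fun v => vc v = k) with hVk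
  set Ek : Fin 5 → Finset (Sym2 (ZMod 7)) :=
    fun k => E.filter (fun e => ec e = k) with hEk
  set P : Sym2 (ZMod 7) → Finset (ZMod 7) :=
    fun e => Finset.univ.filter (· ∈ e) with hP
  -- endpoints of an edge form a 2-element set
  have hPcard : ∀ e ∈ E, (P e).card = 2 := by
    intro e heE
    rw [hE, Finset.mem_filter] at heE
    induction e with
    | _ a b =>
      have hab : a ≠ b := G.ne_of_adj heE.2
      have : P s(a, b) = {a, b} := by
        ext x
        simp [hP, Sym2.mem_iff]
      rw [this, Finset.card_insert_of_notMem (by simpa using hab), Finset.card_singleton]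
  -- vertex color classes are independent, so have ≤ 2 elements
  have hVle : ∀ k, (Vk k).card ≤ 2 := by
    intro k
    by_contra h
    push_neg at h
    obtain ⟨t, hts, ht3⟩ := Finset.exists_subset_card_eq h
    obtain ⟨a, b, c, hab, hac, hbc, rfl⟩ := Finset.card_eq_three.mp ht3
    have ha := hts (Finset.mem_insert_self a {b, c})
    have hb := hts (Finset.mem_insert_of_mem (Finset.mem_insert_self b {c}))
    have hc := hts (Finset.mem_insert_of_mem (Finset.mem_insert_of_mem (Finset.mem_singleton_self c)))
    rw [hVk, Finset.mem_filter] at ha hb hc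
    rcases circ7_no_indep3 a b c hab hac hbc with h' | h' | h'
    · exact hv a b h' (ha.2.trans hb.2.symm)
    · exact hv a c h' (ha.2.trans hc.2.symm)
    · exact hv b c h' (hb.2.trans hc.2.symm)
  -- vertices of a class and endpoints of its edges are all distinct
  have hkey : ∀ k, (Vk k).card + 2 * (Ek k).card ≤ 7 := by
    intro k
    have hdisjE : ∀ e₁ ∈ Ek k, ∀ e₂ ∈ Ek k, e₁ ≠ e₂ → Disjoint (P e₁) (P e₂) := by
      intro e₁ h₁ e₂ h₂ hne
      rw [hEk, Finset.mem_filter, hE, Finset.mem_filter] at h₁ h₂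
      rw [Finset.disjoint_left]
      intro x hx₁ hx₂
      rw [hP, Finset.mem_filter] at hx₁ hx₂
      exact he e₁ h₁.1.2 e₂ h₂.1.2 hne ⟨x, hx₁.2, hx₂.2⟩ (h₁.2.trans h₂.2.symm)
    have hbu : ((Ek k).biUnion P).card = 2 * (Ek k).card := by
      rw [Finset.card_biUnion hdisjE]
      rw [Finset.sum_congr rfl (fun e heE => hPcard e (Finset.mem_of_mem_filter e heE))]
      simp [mul_comm]
      rfl
    have hdisjV : Disjoint (Vk k) ((Ek k).biUnion P) := by
      rw [Finset.disjoint_left]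
      intro x hxV hxB
      rw [Finset.mem_biUnion] at hxB
      obtain ⟨e, heE, hxe⟩ := hxB
      rw [hEk, Finset.mem_filter, hE, Finset.mem_filter] at heE
      rw [hVk, Finset.mem_filter] at hxV
      rw [hP, Finset.mem_filter] at hxe
      exact hve x e heE.1.2 hxe.2 (hxV.2.trans heE.2.symm)
    have := Finset.card_le_univ (Vk k ∪ (Ek k).biUnion P)
    rw [Finset.card_union_of_disjoint hdisjV, hbu] at this
    simpa using this
  have hbound : ∀ k, (Vk k).card + (Ek k).card ≤ 4 := by
    intro k
    have := hVle k
    have := hkey k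
    omega
  -- total counting
  have hsumV : ∑ k : Fin 5, (Vk k).card = 7 := by
    have := Finset.card_eq_sum_card_fiberwise
      (f := vc) (s := (Finset.univ : Finset (ZMod 7))) (t := Finset.univ)
      (fun x _ => Finset.mem_univ (vc x))
    rw [Finset.card_univ, ZMod.card] at this
    rw [hVk]
    simpa using this.symm
  have hsumE : ∑ k : Fin 5, (Ek k).card = 14 := by
    have := Finset.card_eq_sum_card_fiberwise
      (f := ec) (s := E) (t := Finset.univ) (fun x _ => Finset.mem_univ (ec x))
    have hc14 : E.card = 14 := circ7_edge_card
    rw [hc14] at this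
    rw [hEk]
    simpa using this.symm
  have h21 : (21 : ℕ) ≤ 20 := by
    calc (21 : ℕ) = ∑ k : Fin 5, ((Vk k).card + (Ek k).card) := by
          rw [Finset.sum_add_distrib, hsumV, hsumE]
      _ ≤ ∑ _k : Fin 5, 4 := Finset.sum_le_sum (fun k _ => hbound k)
      _ = 20 := by simp
  omega
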